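/- Let t ∈ [1,2), let u, v satisfy t < u < v < 2, and let p > 2/(2-v). Let {δₙ} ⊂ (0,1] be a sequence with (δ₀⋯δ_{n-1})² ≥ δₙ^{(v-u)/2} for all n ≥ 1. Suppose μ is a Borel probability measure on [0,1]² such that for every n and every θ ∈ S¹ there is an interval J_θ,ₙ ⊂ ℝ with |J_θ,ₙ| ≤ C δₙ and (πθ μ)(J_θ,ₙ) ≥ c (δ₀⋯δ_{n-1})² δₙ^{u/2}. Then for every θ ∈ S¹, πθ μ does not have a density in L^p(ℝ). -/

import Mathlib

open MeasureTheory Metric Set Filter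

noncomputable def perp (θ : EuclideanSpace ℝ (Fin 2)) : EuclideanSpace ℝ (Fin 2) :=
  (WithLp.equiv 2 (Fin 2 → ℝ)).symm ![-θ 1, θ 0]

/-- Orthogonal projection onto span(θ^⊥), viewed as a map to ℝ. -/
noncomputable def proj (θ x : EuclideanSpace ℝ (Fin 2)) : ℝ := inner ℝ x (perp θ)

/-- The unit square [0,1]². -/
def unitSq : Set (EuclideanSpace ℝ (Fin 2)) :=
  {x | x 0 ∈ Set.Icc (0:ℝ) 1 ∧ x 1 ∈ Set.Icc (0:ℝ) 1}

theorem stmt_11 (t u v p C c : ℝ) (ht : t ∈ Set.Ico (1:ℝ) 2)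
    (htu : t < u) (huv : u < v) (hv : v < 2)
    (hp : 2 / (2 - v) < p) (hC : 0 < C) (hc : 0 < c)
    (δ : ℕ → ℝ) (hδ : ∀ n, δ n ∈ Set.Ioc (0:ℝ) 1)
    (hδ0 : Filter.Tendsto δ Filter.atTop (nhds 0))
    (hprod : ∀ n : ℕ, 1 ≤ n → (δ n) ^ ((v - u)/2) ≤ (∏ i ∈ Finset.range n, δ i) ^ 2)
    (μ : Measure (EuclideanSpace ℝ (Fin 2))) [IsProbabilityMeasure μ]
    (hsupp : μ unitSqᶜ = 0)
    (hJ : ∀ (n : ℕ) (θ : EuclideanSpace ℝ (Fin 2)), ‖θ‖ = 1 →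
      ∃ x y : ℝ, y - x ≤ C * δ n ∧
        ENNReal.ofReal (c * (∏ i ∈ Finset.range n, δ i) ^ 2 * (δ n) ^ (u/2))
          ≤ (μ.map (proj θ)) (Set.Icc x y)) :
    ∀ θ : EuclideanSpace ℝ (Fin 2), ‖θ‖ = 1 →
      ¬ ∃ f : ℝ → ℝ, MemLp f (ENNReal.ofReal p) volume ∧
          μ.map (proj θ) = volume.withDensity (fun s => ENNReal.ofReal (f s)) := by
  intro θ hθ
  rintro ⟨f, hf, hμeq⟩
  -- exponent facts
  have hv1 : (1:ℝ) < v := lt_of_le_of_lt ht.1 (htu.trans huv)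
  have hv2 : (0:ℝ) < 2 - v := by linarith
  have hp1 : 1 < p := by
    have : (1:ℝ) < 2 / (2 - v) := by
      rw [lt_div_iff₀ hv2]; linarith
    linarith
  have hp0 : 0 < p := by linarith
  set q : ℝ := p / (p - 1) with hq
  have hpq : p.HolderConjugate q := Real.HolderConjugate.conjExponent hp1
  have hq0 : 0 < q := hpq.symm.pos
  -- 1/q - v/2 > 0
  have hqinv : 1 / q = 1 - 1 / p := by
    have := hpq.inv_add_inv_eq_one
    rw [one_div, one_div]; linarith
  have he : 0 < 1 / q - v / 2 := by
    have h1 : 1 / p < (2 - v) / 2 := by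
      rw [div_lt_div_iff₀ hp0 two_pos] at *
      have := (div_lt_iff₀ hv2).mp hp
      linarith
    rw [hqinv]; linarith
  set e : ℝ := 1 / q - v / 2 with he'
  -- the Lp norm
  set K : ENNReal := eLpNorm f (ENNReal.ofReal p) volume with hK
  have hKfin : K ≠ ⊤ := hf.2.ne
  have hfae : AEMeasurable (fun s => ENNReal.ofReal (f s)) volume :=
    ENNReal.measurable_ofReal.comp_aemeasurable hf.1.aemeasurable
  set M : ℝ := K.toReal * C ^ (1 / q) with hM
  -- key inequality for each n ≥ 1
  have key : ∀ n : ℕ, 1 ≤ n → c ≤ M * δ n ^ e := by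
    intro n hn
    obtain ⟨x, y, hxy, hμJ⟩ := hJ n θ hθ
    have hδn := hδ n
    -- Hölder
    rw [hμeq, withDensity_apply _ measurableSet_Icc] at hμJ
    have hind : (fun s : ℝ => (Set.Icc x y).indicator (fun _ => (1:ENNReal)) s) =
        fun s => (Set.Icc x y).indicator (fun _ => (1:ENNReal)) s := rfl
    have holder : ∫⁻ s in Set.Icc x y, ENNReal.ofReal (f s) ≤
        K * (volume (Set.Icc x y)) ^ (1 / q) := by
      have h1 : ∫⁻ s in Set.Icc x y, ENNReal.ofReal (f s) =
          ∫⁻ s, ((fun s => ENNReal.ofReal (f s)) *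
            (Set.Icc x y).indicator (fun _ => (1:ENNReal))) s := by
        rw [← lintegral_indicator measurableSet_Icc]
        congr 1
        funext s
        by_cases hs : s ∈ Set.Icc x y <;>
          simp [Set.indicator, hs]
      rw [h1]
      refine le_trans (ENNReal.lintegral_mul_le_Lp_mul_Lq volume hpq hfae
        ((measurable_one.indicator measurableSet_Icc).aemeasurable)) ?_
      gcongr
      · -- (∫ (ofReal f)^p)^(1/p) ≤ K
        rw [hK, eLpNorm_eq_lintegral_rpow_enorm_toReal (by simp [hp0]) (by simp),
          ENNReal.toReal_ofReal hp0.le]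
        gcongr with s
        exact Real.ofReal_le_enorm (f s)
      · -- (∫ ind^q)^(1/q) ≤ vol^(1/q)
        have : ∫⁻ s, (Set.Icc x y).indicator (fun _ => (1:ENNReal)) s ^ q =
            volume (Set.Icc x y) := by
          rw [← lintegral_indicator_one measurableSet_Icc]
          congr 1
          funext s
          by_cases hs : s ∈ Set.Icc x y <;>
            simp [Set.indicator, hs, ENNReal.zero_rpow_of_pos hq0]
        rw [this]
    -- lower bound the LHS real number
    have hPn : c * δ n ^ (v / 2) ≤ c * (∏ i ∈ Finset.range n, δ i) ^ 2 * δ n ^ (u / 2) := by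
      have h2 : δ n ^ (v / 2) = δ n ^ ((v - u) / 2) * δ n ^ (u / 2) := by
        rw [← Real.rpow_add hδn.1]; ring_nf
      rw [h2, ← mul_assoc]
      have hpos : 0 ≤ δ n ^ (u / 2) := (Real.rpow_pos_of_pos hδn.1 _).le
      gcongr
      exact hprod n hn
    -- combine
    have hvol : volume (Set.Icc x y) ≤ ENNReal.ofReal (C * δ n) := by
      rw [Real.volume_Icc]
      exact ENNReal.ofReal_le_ofReal hxy
    have chain : ENNReal.ofReal (c * δ n ^ (v / 2)) ≤
        K * (ENNReal.ofReal (C * δ n)) ^ (1 / q) := by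
      calc ENNReal.ofReal (c * δ n ^ (v / 2))
          ≤ ENNReal.ofReal (c * (∏ i ∈ Finset.range n, δ i) ^ 2 * δ n ^ (u / 2)) :=
            ENNReal.ofReal_le_ofReal hPn
        _ ≤ ∫⁻ s in Set.Icc x y, ENNReal.ofReal (f s) := hμJ
        _ ≤ K * (volume (Set.Icc x y)) ^ (1 / q) := holder
        _ ≤ K * (ENNReal.ofReal (C * δ n)) ^ (1 / q) := by
            gcongr
    -- go back to reals
    have hCδ : 0 ≤ C * δ n := mul_nonneg hC.le hδn.1.le
    have hrhs_ne : K * (ENNReal.ofReal (C * δ n)) ^ (1 / q) ≠ ⊤ :=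
      ENNReal.mul_ne_top hKfin (ENNReal.rpow_ne_top_of_nonneg (one_div_nonneg.mpr hq0.le) ENNReal.ofReal_ne_top)
    have hreal : c * δ n ^ (v / 2) ≤ K.toReal * (C * δ n) ^ (1 / q) := by
      have := ENNReal.toReal_mono hrhs_ne chain
      rwa [ENNReal.toReal_ofReal (mul_nonneg hc.le (Real.rpow_pos_of_pos hδn.1 _).le), ENNReal.toReal_mul,
        ← ENNReal.toReal_rpow, ENNReal.toReal_ofReal hCδ] at this
    -- divide by δ n ^ (v/2)
    have hsplit : (C * δ n) ^ (1 / q) = C ^ (1 / q) * δ n ^ (1 / q) :=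
      Real.mul_rpow hC.le hδn.1.le
    have hmul : δ n ^ e * δ n ^ (v / 2) = δ n ^ (1 / q) := by
      rw [← Real.rpow_add hδn.1]
      congr 1
      rw [he']; ring
    have hfinal : K.toReal * (C * δ n) ^ (1 / q) = M * δ n ^ e * δ n ^ (v / 2) := by
      rw [hsplit, hM, mul_assoc (K.toReal * C ^ (1 / q)), hmul, mul_assoc]
    rw [hfinal] at hreal
    have hδpos : 0 < δ n ^ (v / 2) := Real.rpow_pos_of_pos hδn.1 _
    exact le_of_mul_le_mul_right hreal hδpos
  -- limit argument
  have hten : Tendsto (fun n => M * δ n ^ e) atTop (nhds 0) := by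
    have h1 : Tendsto (fun n => δ n ^ e) atTop (nhds ((0:ℝ) ^ e)) :=
      hδ0.rpow_const (Or.inr he.le)
    rw [Real.zero_rpow he.ne'] at h1
    simpa using h1.const_mul M
  have := (hten.eventually (gt_mem_nhds hc)).and (eventually_ge_atTop 1)
  obtain ⟨n, hlt, hn⟩ := this.exists
  exact absurd (key n hn) (not_le.mpr hlt)
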